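/- Let β > 0, ε ∈ (0,1), and r ∈ ℝ. Define a_t = −β⁻¹ · log( Σ_{k=0}^{t−1} (1−ε)·ε^k · exp(−β·r·k) ) for t ≥ 1. Then the sequence (a_t) converges to a finite limit as t → ∞ if and only if ε·exp(−β·r) < 1; and if ε·exp(−β·r) ≥ 1, then a_t → −∞. In particular, taking r = −1 and β > −log ε yields a_t → −∞, showing that the ERM total-reward value of a transient MDP can equal −∞ for a large enough risk level β. -/

import Mathlib

set_option autoImplicit false

open Filter Finset

/-- The ERM total-reward value of the one-state transient MDP (per-step reward `r`,
self-transition probability `1-ε`, termination probability `1-ε`):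
`a t = -β⁻¹ log (Σ_{k<t} (1-ε) ε^k exp(-β r k))` converges to a finite limit iff
`ε·exp(-β r) < 1`; otherwise `a t → -∞`.  In particular for `r = -1` and
`β > -log ε` we get `a t → -∞`. -/
theorem erm_trc_can_be_unbounded (β ε r : ℝ) (hβ : 0 < β) (hε : ε ∈ Set.Ioo (0 : ℝ) 1) :
    let a : ℕ → ℝ := fun t =>
      -β⁻¹ * Real.log (∑ k ∈ Finset.range t, (1 - ε) * ε ^ k * Real.exp (-β * r * k))
    ((∃ L : ℝ, Tendsto a atTop (nhds L)) ↔ ε * Real.exp (-β * r) < 1) ∧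
    (1 ≤ ε * Real.exp (-β * r) → Tendsto a atTop atBot) ∧
    (r = -1 → -Real.log ε < β → Tendsto a atTop atBot) := by
  intro a
  set q := ε * Real.exp (-β * r) with hqdef
  have hq0 : 0 < q := mul_pos hε.1 (Real.exp_pos _)
  have hε1 : (0:ℝ) < 1 - ε := by linarith [hε.2]
  have ha : ∀ t, a t = -β⁻¹ * Real.log (∑ k ∈ Finset.range t, (1 - ε) * q ^ k) := by
    intro t
    have : ∀ k ∈ Finset.range t,
        (1 - ε) * ε ^ k * Real.exp (-β * r * k) = (1 - ε) * q ^ k := by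
      intro k _
      have he : Real.exp (-β * r * k) = Real.exp (-β * r) ^ k := by
        rw [← Real.exp_nat_mul, mul_comm]
      rw [he, hqdef, mul_pow, mul_assoc]
    simp only [a, Finset.sum_congr rfl this]
  have hbot : 1 ≤ q → Tendsto a atTop atBot := by
    intro h1
    have hS : Tendsto (fun t : ℕ => ∑ k ∈ Finset.range t, (1 - ε) * q ^ k) atTop atTop := by
      have hlb : Tendsto (fun t : ℕ => (1 - ε) * t) atTop atTop :=
        (tendsto_natCast_atTop_atTop (R := ℝ)).const_mul_atTop hε1
      refine tendsto_atTop_mono (fun t => ?_) hlb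
      calc (1 - ε) * (t : ℝ) = ∑ _k ∈ Finset.range t, (1 - ε) * 1 := by
            simp [mul_comm]
            ring
        _ ≤ ∑ k ∈ Finset.range t, (1 - ε) * q ^ k := by
            refine Finset.sum_le_sum fun k _ => ?_
            have : (1:ℝ) ≤ q ^ k := one_le_pow₀ h1
            nlinarith
    have hlog : Tendsto (fun t : ℕ =>
        β⁻¹ * Real.log (∑ k ∈ Finset.range t, (1 - ε) * q ^ k)) atTop atTop :=
      (Real.tendsto_log_atTop.comp hS).const_mul_atTop (inv_pos.2 hβ)
    have hneg := tendsto_neg_atTop_atBot.comp hlog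
    refine hneg.congr fun t => ?_
    simp [Function.comp, ha t, neg_mul]
  have hlim : q < 1 → ∃ L, Tendsto a atTop (nhds L) := by
    intro h1
    have hsum : HasSum (fun k : ℕ => (1 - ε) * q ^ k) ((1 - ε) * (1 - q)⁻¹) :=
      (hasSum_geometric_of_lt_one hq0.le h1).mul_left _
    have hS := hsum.tendsto_sum_nat
    have hpos : (0:ℝ) < (1 - ε) * (1 - q)⁻¹ :=
      mul_pos hε1 (inv_pos.2 (by linarith))
    refine ⟨-β⁻¹ * Real.log ((1 - ε) * (1 - q)⁻¹), ?_⟩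
    have hcont := ((Real.continuousAt_log hpos.ne').tendsto.comp hS).const_mul (-β⁻¹)
    refine hcont.congr fun t => ?_
    simp [Function.comp, ha t]
  refine ⟨⟨fun ⟨L, hL⟩ => ?_, hlim⟩, hbot, fun hr hβ' => hbot ?_⟩
  · by_contra h
    exact not_tendsto_nhds_of_tendsto_atBot (hbot (le_of_not_gt h)) L hL
  · subst hr
    have : Real.exp (-β * (-1)) = Real.exp β := by ring_nf
    rw [hqdef, this]
    have h2 : ε⁻¹ ≤ Real.exp β := by
      have := Real.exp_le_exp.2 hβ'.le
      rwa [Real.exp_neg, Real.exp_log hε.1] at this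
    calc (1:ℝ) = ε * ε⁻¹ := (mul_inv_cancel₀ hε.1.ne').symm
      _ ≤ ε * Real.exp β := by nlinarith [hε.1]
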